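/- Let L_1, ..., L_m be N×N real symmetric positive semidefinite matrices each satisfying L_i·1 = 0, and for μ ∈ Δ^{m-1} set L(μ) = Σ_{i=1}^m μ_i L_i. Assume that the second smallest eigenvalue λ_1(L(μ)) is a simple eigenvalue of L(μ) for every μ ∈ Δ^{m-1}. Then min over unit vectors x ∈ R^N with xᵀ·1 = 0 of max_{i=1,...,m} xᵀ L_i x equals max over μ ∈ Δ^{m-1} of min over unit vectors x ∈ R^N with xᵀ·1 = 0 of xᵀ L(μ) x. -/

import Mathlib

open Matrix

/-- Eigenvalues of a real symmetric matrix, sorted in increasing order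
(`sortedEig L 0 ≤ sortedEig L 1 ≤ ...`); junk value `0` if `L` is not symmetric. -/
noncomputable def sortedEig {N : ℕ} (L : Matrix (Fin N) (Fin N) ℝ) : Fin N → ℝ :=
  if h : L.IsHermitian then h.eigenvalues ∘ ⇑(Tuple.sort h.eigenvalues) else fun _ => 0


set_option maxHeartbeats 1000000
open Finset
open scoped RealInnerProductSpace

lemma dot_eq_inner {N : ℕ} (x y : EuclideanSpace ℝ (Fin N)) : (⇑x) ⬝ᵥ (⇑y) = ⟪x, y⟫ := by
  simp [PiLp.inner_apply, dotProduct, mul_comm]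

lemma quadform_eigen {N : ℕ} (A : Matrix (Fin N) (Fin N) ℝ) (hA : A.IsHermitian)
    (x : EuclideanSpace ℝ (Fin N)) :
    (⇑x) ⬝ᵥ (A *ᵥ ⇑x) = ∑ j, hA.eigenvalues j * ⟪hA.eigenvectorBasis j, x⟫ ^ 2 := by
  set u := hA.eigenvectorBasis with hu
  have horth := orthonormal_iff_ite.mp u.orthonormal
  set T := Matrix.toEuclideanLin A with hT
  have hTapp : ∀ y : EuclideanSpace ℝ (Fin N), (⇑(T y) : Fin N → ℝ) = A *ᵥ ⇑y := by
    intro y; rfl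
  have hTu : ∀ j, T (u j) = hA.eigenvalues j • u j := by
    intro j
    apply (WithLp.equiv 2 _).injective
    show (⇑(T (u j)) : Fin N → ℝ) = _
    rw [hTapp, hA.mulVec_eigenvectorBasis]
    rfl
  have key : (⇑x) ⬝ᵥ (A *ᵥ ⇑x) = ⟪x, T x⟫ := by rw [← hTapp]; exact dot_eq_inner x (T x)
  rw [key]
  conv_lhs => rw [← u.sum_repr' x]
  rw [map_sum, inner_sum, Finset.sum_congr rfl]
  intro j _
  rw [_root_.map_smul, hTu j, sum_inner]
  rw [Finset.sum_eq_single j]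
  · rw [real_inner_smul_left, inner_smul_right, real_inner_smul_right]
    simp [horth j j]
    ring
  · intro k _ hk
    rw [real_inner_smul_left, inner_smul_right, real_inner_smul_right]
    simp [horth k j, hk]
  · simp

lemma dotProduct_sum'' {N k : ℕ} (x : Fin N → ℝ) (v : Fin k → Fin N → ℝ) :
    x ⬝ᵥ (∑ j, v j) = ∑ j, x ⬝ᵥ v j := by
  simp [dotProduct, Finset.mul_sum]
  exact Finset.sum_comm

lemma sum_mulVec' {N k : ℕ} (M : Fin k → Matrix (Fin N) (Fin N) ℝ) (x : Fin N → ℝ) :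
    (∑ j, M j) *ᵥ x = ∑ j, (M j *ᵥ x) := by
  ext i
  simp [mulVec, dotProduct, Matrix.sum_apply, Finset.sum_apply, Finset.sum_mul]
  exact Finset.sum_comm

lemma quad_combo {N k : ℕ} (M : Fin k → Matrix (Fin N) (Fin N) ℝ) (μ : Fin k → ℝ) (x : Fin N → ℝ) :
    x ⬝ᵥ ((∑ i, μ i • M i) *ᵥ x) = ∑ i, μ i * (x ⬝ᵥ (M i *ᵥ x)) := by
  rw [sum_mulVec', dotProduct_sum'']
  exact Finset.sum_congr rfl fun i _ => by simp [smul_mulVec]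

lemma gap_lemma {N : ℕ} (hN : 1 < N) (A : Matrix (Fin N) (Fin N) ℝ) (hA : A.PosSemidef)
    (h1 : A *ᵥ (fun _ => (1:ℝ)) = 0)
    (hs : ∀ j : Fin N, sortedEig A j = sortedEig A ⟨1, hN⟩ → j = ⟨1, hN⟩) :
    ∃ (xs : Fin N → ℝ) (G : ℝ), 0 < G ∧ xs ⬝ᵥ xs = 1 ∧ xs ⬝ᵥ (fun _ => (1:ℝ)) = 0 ∧
      xs ⬝ᵥ (A *ᵥ xs) = sortedEig A ⟨1, hN⟩ ∧
      ∀ x : Fin N → ℝ, x ⬝ᵥ x = 1 → x ⬝ᵥ (fun _ => (1:ℝ)) = 0 →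
        sortedEig A ⟨1, hN⟩ + G * (1 - (xs ⬝ᵥ x)^2) ≤ x ⬝ᵥ (A *ᵥ x) := by
  have hA' : A.IsHermitian := hA.1
  set α := hA'.eigenvalues with hα
  set u := hA'.eigenvectorBasis with hu
  set σ : Equiv.Perm (Fin N) := Tuple.sort α with hσ
  have hsort : sortedEig A = α ∘ ⇑σ := by rw [sortedEig, dif_pos hA']
  set β : Fin N → ℝ := α ∘ ⇑σ with hβ
  have hmono : Monotone β := Tuple.monotone_sort α
  have hnn : ∀ j, 0 ≤ α j := hA.eigenvalues_nonneg
  have horth := orthonormal_iff_ite.mp u.orthonormal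
  set T := Matrix.toEuclideanLin A with hT
  have hTapp : ∀ y : EuclideanSpace ℝ (Fin N), (⇑(T y) : Fin N → ℝ) = A *ᵥ ⇑y := fun y => rfl
  have hsym : ∀ y z : EuclideanSpace ℝ (Fin N), ⟪T y, z⟫ = ⟪y, T z⟫ :=
    (Matrix.isHermitian_iff_isSymmetric.mp hA')
  -- the all-ones vector
  set E1 : EuclideanSpace ℝ (Fin N) := WithLp.toLp 2 (fun _ => (1:ℝ)) with hE1
  have hTE1 : T E1 = 0 := by
    apply (WithLp.equiv 2 _).injective
    show (⇑(T E1) : Fin N → ℝ) = _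
    rw [hTapp]
    exact h1
  -- eigenvalue coefficient relation for the ones vector
  have hcoef : ∀ j, α j * ⟪u j, E1⟫ = 0 := by
    intro j
    have h2 : T (u j) = α j • u j := by
      apply (WithLp.equiv 2 _).injective
      show (⇑(T (u j)) : Fin N → ℝ) = _
      rw [hTapp, hA'.mulVec_eigenvectorBasis]; rfl
    have := hsym (u j) E1
    rw [hTE1, inner_zero_right, h2, real_inner_smul_left] at this
    linarith [this]
  
  set i0 : Fin N := ⟨0, by omega⟩ with hi0
  set i1 : Fin N := ⟨1, hN⟩ with hi1
  have hi01 : i0 ≠ i1 := by simp [hi0, hi1, Fin.ext_iff]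
  have hs' : ∀ j : Fin N, β j = β i1 → j = i1 := by
    intro j hj
    exact hs j (by rw [hsort]; exact hj)
  -- some eigenvalue is zero
  have hE1ne : E1 ≠ 0 := by
    intro h
    have : (1:ℝ) = 0 := by
      have := congrFun congr(⇑$h) i0
      simpa [hE1] using this
    norm_num at this
  have hex : ∃ j, ⟪u j, E1⟫ ≠ 0 := by
    by_contra hcon
    push_neg at hcon
    apply hE1ne
    have := u.sum_repr' E1
    simp only [hcon, zero_smul, Finset.sum_const_zero] at this
    exact this.symm
  obtain ⟨jz, hjz⟩ := hex
  have hαjz : α jz = 0 := by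
    rcases mul_eq_zero.mp (hcoef jz) with h | h
    · exact h
    · exact absurd h hjz
  -- sorted eigenvalue facts
  have hβ0 : β i0 = 0 := by
    apply le_antisymm
    · have h2 : β (σ.symm jz) = 0 := by simp [hβ, hαjz]
      calc β i0 ≤ β (σ.symm jz) := hmono (by simp [hi0, Fin.le_def])
        _ = 0 := h2
    · exact hnn _
  have hlampos : 0 < β i1 := by
    rcases lt_or_eq_of_le (hmono (show i0 ≤ i1 by simp [hi0, hi1, Fin.le_def])) with h | h
    · rwa [hβ0] at h
    · exact absurd (hs' i0 h) hi01
  set lam := β i1 with hlam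
  have hβval : ∀ k : Fin N, β k = α (σ k) := fun k => rfl
  have hge1 : ∀ j : Fin N, j ≠ σ i0 → lam ≤ α j := by
    intro j hj
    have hk0 : σ.symm j ≠ i0 := fun h => hj (by rw [← h]; simp)
    have hk : i1 ≤ σ.symm j := by
      rw [Fin.le_def]
      have : (σ.symm j).val ≠ 0 := fun h => hk0 (Fin.ext (by simp [h, hi0]))
      simp only [hi1]
      omega
    calc lam ≤ β (σ.symm j) := hmono hk
      _ = α j := by rw [hβval]; simp
  -- the spectral gap above lam
  set G : ℝ := if h2 : 2 < N then β ⟨2, h2⟩ - lam else 1 with hG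
  have hGpos : 0 < G := by
    rw [hG]
    split_ifs with h2
    · have hle : lam ≤ β ⟨2, h2⟩ := hmono (by simp [hi1, Fin.le_def])
      rcases lt_or_eq_of_le hle with h | h
      · linarith
      · have := hs' ⟨2, h2⟩ h.symm
        simp [hi1, Fin.ext_iff] at this
    · norm_num
  have hge2 : ∀ j : Fin N, j ≠ σ i0 → j ≠ σ i1 → lam + G ≤ α j := by
    intro j hj0 hj1
    have hk0 : σ.symm j ≠ i0 := fun h => hj0 (by rw [← h]; simp)
    have hk1 : σ.symm j ≠ i1 := fun h => hj1 (by rw [← h]; simp)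
    have hkval : 2 ≤ (σ.symm j).val := by
      have h0 : (σ.symm j).val ≠ 0 := fun h => hk0 (Fin.ext (by simp [h, hi0]))
      have h1 : (σ.symm j).val ≠ 1 := fun h => hk1 (Fin.ext (by simp [h, hi1]))
      omega
    have h2N : 2 < N := lt_of_le_of_lt hkval (σ.symm j).isLt
    have hGeq : G = β ⟨2, h2N⟩ - lam := by rw [hG, dif_pos h2N]
    have : β ⟨2, h2N⟩ ≤ β (σ.symm j) := hmono (by simp [Fin.le_def]; omega)
    have hαval : β (σ.symm j) = α j := by rw [hβval]; simp
    linarith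
  -- the ones vector spans the kernel
  have hc1 : ∀ j : Fin N, j ≠ σ i0 → ⟪u j, E1⟫ = 0 := by
    intro j hj
    rcases mul_eq_zero.mp (hcoef j) with h | h
    · exact absurd h (by have := hge1 j hj; intro h0; rw [h0] at this; linarith)
    · exact h
  have hE1span : E1 = ⟪u (σ i0), E1⟫ • u (σ i0) := by
    conv_lhs => rw [← u.sum_repr' E1]
    rw [Finset.sum_eq_single (σ i0)]
    · intro k _ hk
      rw [hc1 k hk, zero_smul]
    · simp
  have hcne : ⟪u (σ i0), E1⟫ ≠ 0 := by
    intro h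
    rw [h, zero_smul] at hE1span
    exact hE1ne hE1span
  have hperp : ∀ x : EuclideanSpace ℝ (Fin N), (⇑x) ⬝ᵥ (fun _ => (1:ℝ)) = 0 →
      ⟪u (σ i0), x⟫ = 0 := by
    intro x hx
    have hd : (⇑x) ⬝ᵥ (⇑E1) = 0 := hx
    rw [dot_eq_inner] at hd
    have : ⟪x, E1⟫ = ⟪u (σ i0), E1⟫ * ⟪x, u (σ i0)⟫ := by
      conv_lhs => rw [hE1span]
      rw [real_inner_smul_right]
    rw [hd] at this
    have h2 : ⟪x, u (σ i0)⟫ = 0 := by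
      rcases mul_eq_zero.mp this.symm with h | h
      · exact absurd h hcne
      · exact h
    rw [real_inner_comm]; exact h2
  have hsumsq : ∀ x : EuclideanSpace ℝ (Fin N), (⇑x) ⬝ᵥ (⇑x) = ∑ j, ⟪u j, x⟫ ^ 2 := by
    intro x
    rw [dot_eq_inner]
    nth_rewrite 1 [← u.sum_repr' x]
    rw [sum_inner]
    congr 1; ext j
    rw [real_inner_smul_left]; ring
  -- the second eigenvector
  refine ⟨⇑(u (σ i1)), G, hGpos, ?_, ?_, ?_, ?_⟩
  · rw [dot_eq_inner]; simpa using horth (σ i1) (σ i1)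
  · have h2 : (⇑(u (σ i1))) ⬝ᵥ (⇑E1) = (0:ℝ) := by
      rw [dot_eq_inner]
      exact hc1 (σ i1) (fun h => hi01 (σ.injective h).symm)
    exact h2
  · rw [quadform_eigen A hA' (u (σ i1)), hsort, ← hu, ← hα]
    rw [Finset.sum_eq_single (σ i1)]
    · have h3 : α (σ i1) = β i1 := (hβval i1).symm
      simpa [horth (σ i1) (σ i1)] using h3
    · intro k _ hk
      simp [horth k (σ i1), hk]
    · simp
  · intro x hx1 hx2
    set x' : EuclideanSpace ℝ (Fin N) := WithLp.toLp 2 x with hx'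
    have hxc : x = ⇑x' := rfl
    set c : Fin N → ℝ := fun j => ⟪u j, x'⟫ with hc
    have hquad : x ⬝ᵥ (A *ᵥ x) = ∑ j, α j * c j ^ 2 := quadform_eigen A hA' x'
    have hcz : c (σ i0) = 0 := hperp x' hx2
    have hcsum : ∑ j, c j ^ 2 = 1 := by rw [← hsumsq x']; exact hx1
    have hcs : (⇑(u (σ i1))) ⬝ᵥ x = c (σ i1) := by
      rw [hxc, dot_eq_inner]
    rw [hquad, hcs, hsort]
    -- split the sum
    have hne : σ i0 ≠ σ i1 := fun h => hi01 (σ.injective h)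
    classical
    have hsplit := Finset.sum_add_sum_compl ({σ i0, σ i1} : Finset (Fin N))
      (fun j => α j * c j ^ 2)
    have hsplit2 := Finset.sum_add_sum_compl ({σ i0, σ i1} : Finset (Fin N))
      (fun j => c j ^ 2)
    rw [Finset.sum_pair hne] at hsplit hsplit2
    have hlam1 : α (σ i1) = lam := by rw [hlam, hβval]
    have halpha0 : α (σ i0) = 0 := by
      have := hβ0; rw [hβval] at this; exact this
    have hrest : ∀ j ∈ ({σ i0, σ i1} : Finset (Fin N))ᶜ, (lam + G) * c j ^ 2 ≤ α j * c j ^ 2 := by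
      intro j hj
      simp only [Finset.mem_compl, Finset.mem_insert, Finset.mem_singleton, not_or] at hj
      exact mul_le_mul_of_nonneg_right (hge2 j hj.1 hj.2) (sq_nonneg _)
    have hsum_rest : ∑ j ∈ ({σ i0, σ i1} : Finset (Fin N))ᶜ, c j ^ 2 = 1 - c (σ i1) ^ 2 := by
      rw [hcsum] at hsplit2
      rw [hcz] at hsplit2
      linarith [hsplit2]
    have hbound : (lam + G) * (1 - c (σ i1) ^ 2) ≤
        ∑ j ∈ ({σ i0, σ i1} : Finset (Fin N))ᶜ, α j * c j ^ 2 := by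
      calc (lam + G) * (1 - c (σ i1) ^ 2)
          = ∑ j ∈ ({σ i0, σ i1} : Finset (Fin N))ᶜ, (lam + G) * c j ^ 2 := by
            rw [← Finset.mul_sum, hsum_rest]
        _ ≤ _ := Finset.sum_le_sum hrest
    have hcle : c (σ i1) ^ 2 ≤ 1 := by
      have h0 : (0:ℝ) ≤ ∑ j ∈ ({σ i0, σ i1} : Finset (Fin N))ᶜ, c j ^ 2 :=
        Finset.sum_nonneg (fun j _ => sq_nonneg _)
      linarith [hsum_rest, h0]
    have : lam + G * (1 - c (σ i1) ^ 2) ≤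
        α (σ i0) * c (σ i0) ^ 2 + α (σ i1) * c (σ i1) ^ 2 +
        ∑ j ∈ ({σ i0, σ i1} : Finset (Fin N))ᶜ, α j * c j ^ 2 := by
      rw [hcz, hlam1, halpha0]
      nlinarith [hbound]
    calc lam + G * (1 - c (σ i1) ^ 2) ≤ _ := this
      _ = ∑ j, α j * c j ^ 2 := hsplit

lemma quad_double {N : ℕ} (B : Matrix (Fin N) (Fin N) ℝ) (x : Fin N → ℝ) :
    x ⬝ᵥ (B *ᵥ x) = ∑ i, ∑ j, x i * (B i j * x j) := by
  simp [dotProduct, mulVec, Finset.mul_sum]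

lemma entry_abs_le {N : ℕ} (x : Fin N → ℝ) (hx : x ⬝ᵥ x = 1) (i : Fin N) : |x i| ≤ 1 := by
  have h1 : x i * x i ≤ 1 := by
    rw [← hx]
    exact Finset.single_le_sum (f := fun k => x k * x k) (fun k _ => mul_self_nonneg _)
      (Finset.mem_univ i)
  nlinarith [abs_nonneg (x i), sq_abs (x i)]

lemma quad_abs_le {N : ℕ} (B : Matrix (Fin N) (Fin N) ℝ) (x : Fin N → ℝ) (hx : x ⬝ᵥ x = 1) :
    |x ⬝ᵥ (B *ᵥ x)| ≤ ∑ i, ∑ j, |B i j| := by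
  rw [quad_double]
  calc |∑ i, ∑ j, x i * (B i j * x j)| ≤ ∑ i, |∑ j, x i * (B i j * x j)| :=
        Finset.abs_sum_le_sum_abs _ _
    _ ≤ ∑ i, ∑ j, |x i * (B i j * x j)| :=
        Finset.sum_le_sum fun i _ => Finset.abs_sum_le_sum_abs _ _
    _ ≤ ∑ i, ∑ j, |B i j| := by
        refine Finset.sum_le_sum fun i _ => Finset.sum_le_sum fun j _ => ?_
        rw [abs_mul, abs_mul]
        calc |x i| * (|B i j| * |x j|) ≤ 1 * (|B i j| * 1) := by
              have h1 := entry_abs_le x hx i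
              have h2 := entry_abs_le x hx j
              exact mul_le_mul h1 (mul_le_mul_of_nonneg_left h2 (abs_nonneg _))
                (by positivity) zero_le_one
          _ = |B i j| := by ring

lemma quad_diff {N : ℕ} (B : Matrix (Fin N) (Fin N) ℝ) (x y : Fin N → ℝ)
    (hx : x ⬝ᵥ x = 1) (hy : y ⬝ᵥ y = 1) (d : ℝ) (hd : ∀ i, |x i - y i| ≤ d) :
    |x ⬝ᵥ (B *ᵥ x) - y ⬝ᵥ (B *ᵥ y)| ≤ 2 * (∑ i, ∑ j, |B i j|) * d := by
  have hd0 : 0 ≤ d := le_trans (abs_nonneg _) (hd ⟨0, by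
    rcases Nat.eq_zero_or_pos N with h | h
    · exact absurd hx (by subst h; simp [dotProduct])
    · exact h⟩)
  rw [quad_double, quad_double, ← Finset.sum_sub_distrib]
  simp_rw [← Finset.sum_sub_distrib]
  calc |∑ i, ∑ j, (x i * (B i j * x j) - y i * (B i j * y j))|
      ≤ ∑ i, ∑ j, |x i * (B i j * x j) - y i * (B i j * y j)| := by
        refine le_trans (Finset.abs_sum_le_sum_abs _ _) (Finset.sum_le_sum fun i _ => ?_)
        exact Finset.abs_sum_le_sum_abs _ _
    _ ≤ ∑ i, ∑ j, |B i j| * (2 * d) := by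
        refine Finset.sum_le_sum fun i _ => Finset.sum_le_sum fun j _ => ?_
        have key : x i * (B i j * x j) - y i * (B i j * y j)
            = B i j * ((x i - y i) * x j + y i * (x j - y j)) := by ring
        rw [key, abs_mul]
        have h1 : |(x i - y i) * x j + y i * (x j - y j)| ≤ 2 * d := by
          calc |(x i - y i) * x j + y i * (x j - y j)|
              ≤ |(x i - y i) * x j| + |y i * (x j - y j)| := abs_add_le _ _
            _ ≤ d * 1 + 1 * d := by
                rw [abs_mul, abs_mul]
                have := entry_abs_le x hx j
                have := entry_abs_le y hy i
                have := hd i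
                have := hd j
                refine add_le_add (mul_le_mul ?_ ?_ (abs_nonneg _) hd0)
                  (mul_le_mul ?_ ?_ (abs_nonneg _) zero_le_one) <;> assumption
            _ = 2 * d := by ring
        exact mul_le_mul_of_nonneg_left h1 (abs_nonneg _)
    _ = 2 * (∑ i, ∑ j, |B i j|) * d := by
        simp_rw [← Finset.sum_mul]
        ring

lemma sp_nonempty {N : ℕ} (hN : 1 < N) :
    ∃ x : Fin N → ℝ, x ⬝ᵥ x = 1 ∧ x ⬝ᵥ (fun _ => (1:ℝ)) = 0 := by
  set i0 : Fin N := ⟨0, by omega⟩ with hi0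
  set i1 : Fin N := ⟨1, hN⟩ with hi1
  have hne : i0 ≠ i1 := by simp [hi0, hi1, Fin.ext_iff]
  set a : ℝ := (Real.sqrt 2)⁻¹ with ha
  have ha2 : a * a = 1 / 2 := by
    rw [ha, ← mul_inv]
    rw [Real.mul_self_sqrt (by norm_num : (0:ℝ) ≤ 2)]
    norm_num
  set v : Fin N → ℝ := a • (Pi.single i0 1 : Fin N → ℝ) + (-a) • (Pi.single i1 1 : Fin N → ℝ) with hv
  refine ⟨v, ?_, ?_⟩
  · rw [hv]
    simp only [add_dotProduct, dotProduct_add, smul_dotProduct, dotProduct_smul,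
      single_dotProduct, dotProduct_single, smul_eq_mul]
    simp [Pi.single_apply, hne, hne.symm]
    nlinarith [ha2]
  · rw [hv]
    simp only [add_dotProduct, smul_dotProduct, single_dotProduct, smul_eq_mul]
    ring


lemma dot_sq_le {N : ℕ} (x y : Fin N → ℝ) (hx : x ⬝ᵥ x = 1) (hy : y ⬝ᵥ y = 1) :
    (x ⬝ᵥ y) ^ 2 ≤ 1 := by
  set x' : EuclideanSpace ℝ (Fin N) := WithLp.toLp 2 x with hx'
  set y' : EuclideanSpace ℝ (Fin N) := WithLp.toLp 2 y with hy'
  have h := real_inner_mul_inner_self_le x' y'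
  have e1 : x ⬝ᵥ y = ⟪x', y'⟫ := dot_eq_inner x' y'
  have e2 : x ⬝ᵥ x = ⟪x', x'⟫ := dot_eq_inner x' x'
  have e3 : y ⬝ᵥ y = ⟪y', y'⟫ := dot_eq_inner y' y'
  rw [e2] at hx; rw [e3] at hy
  rw [e1, sq]
  rw [hx, hy] at h
  linarith

lemma ciInf_le_ciInf_add' {ι : Sort*} [Nonempty ι] (f g : ι → ℝ) (ε : ℝ)
    (hf : BddBelow (Set.range f)) (h : ∀ i, f i ≤ g i + ε) :
    (⨅ i, f i) ≤ (⨅ i, g i) + ε := by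
  have h1 : ∀ i, (⨅ i, f i) - ε ≤ g i := fun i => by
    have h2 := ciInf_le hf i
    linarith [h i]
  linarith [le_ciInf h1]


/-- Theorem 2 of Coifman et al.: assuming `λ_1(L(μ))` is a simple eigenvalue for every
`μ ∈ Δ^{m-1}` (i.e. the value `λ_1` appears exactly once in the sorted list of eigenvalues),
the min over unit `x ⊥ 1` of `max_i xᵀ L_i x` equals the max over `μ ∈ Δ^{m-1}` of the min
over unit `x ⊥ 1` of `xᵀ L(μ) x`. -/
theorem stmt2 {N m : ℕ} (hm : 0 < m) (hN : 1 < N)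
    (L : Fin m → Matrix (Fin N) (Fin N) ℝ)
    (hpsd : ∀ i, (L i).PosSemidef)
    (hone : ∀ i, L i *ᵥ (fun _ => (1 : ℝ)) = 0)
    (hsimple : ∀ μ ∈ stdSimplex ℝ (Fin m), ∀ j : Fin N,
      sortedEig (∑ i, μ i • L i) j = sortedEig (∑ i, μ i • L i) ⟨1, hN⟩ → j = ⟨1, hN⟩) :
    (⨅ x : {x : Fin N → ℝ // x ⬝ᵥ x = 1 ∧ x ⬝ᵥ (fun _ => (1 : ℝ)) = 0},
      ⨆ i : Fin m, (x : Fin N → ℝ) ⬝ᵥ (L i *ᵥ (x : Fin N → ℝ))) =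
    (⨆ μ : stdSimplex ℝ (Fin m),
      ⨅ x : {x : Fin N → ℝ // x ⬝ᵥ x = 1 ∧ x ⬝ᵥ (fun _ => (1 : ℝ)) = 0},
        (x : Fin N → ℝ) ⬝ᵥ ((∑ i, (μ : Fin m → ℝ) i • L i) *ᵥ (x : Fin N → ℝ))) := by
  classical
  haveI : Nonempty (Fin m) := ⟨⟨0, hm⟩⟩
  -- the feasible set
  set S := {x : Fin N → ℝ // x ⬝ᵥ x = 1 ∧ x ⬝ᵥ (fun _ => (1 : ℝ)) = 0} with hS
  obtain ⟨x0, hx01, hx02⟩ := sp_nonempty hN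
  haveI hSne : Nonempty S := ⟨⟨x0, hx01, hx02⟩⟩
  -- quadratic forms
  set Q : Matrix (Fin N) (Fin N) ℝ → (Fin N → ℝ) → ℝ := fun B x => x ⬝ᵥ (B *ᵥ x) with hQ
  set Mi : Fin m → ℝ := fun i => ∑ k, ∑ j, |L i k j| with hMi
  have hMi0 : ∀ i, 0 ≤ Mi i := fun i =>
    Finset.sum_nonneg fun k _ => Finset.sum_nonneg fun j _ => abs_nonneg _
  set M : ℝ := ∑ i, Mi i with hM
  have hM0 : 0 ≤ M := Finset.sum_nonneg fun i _ => hMi0 i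
  have hQabs : ∀ i (x : S), |Q (L i) x| ≤ Mi i := fun i x =>
    quad_abs_le (L i) x x.2.1
  have hQnn : ∀ i (x : S), 0 ≤ Q (L i) x := by
    intro i x
    have := (hpsd i).dotProduct_mulVec_nonneg (x : Fin N → ℝ)
    simpa [hQ] using this
  have hQsum : ∀ (μ : Fin m → ℝ) (x : Fin N → ℝ),
      Q (∑ i, μ i • L i) x = ∑ i, μ i * Q (L i) x := fun μ x => quad_combo L μ x
  -- lower bound function
  set h : (Fin m → ℝ) → ℝ := fun μ => ⨅ x : S, Q (∑ i, μ i • L i) x with hh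
  have hbdd : ∀ μ : Fin m → ℝ, BddBelow (Set.range (fun x : S => Q (∑ i, μ i • L i) x)) := by
    intro μ
    refine ⟨-∑ i, |μ i| * Mi i, ?_⟩
    rintro r ⟨x, rfl⟩
    show -∑ i, |μ i| * Mi i ≤ Q (∑ i, μ i • L i) (x : Fin N → ℝ)
    rw [hQsum]
    have : ∀ i ∈ Finset.univ, -(|μ i| * Mi i) ≤ μ i * Q (L i) x := by
      intro i _
      have h1 := hQabs i x
      have h2 := abs_mul (μ i) (Q (L i) x) ▸ abs_le.mp (le_refl |μ i * Q (L i) x|)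
      have h3 : |μ i * Q (L i) x| ≤ |μ i| * Mi i := by
        rw [abs_mul]
        exact mul_le_mul_of_nonneg_left h1 (abs_nonneg _)
      have := neg_abs_le (μ i * Q (L i) x)
      linarith
    have := Finset.sum_le_sum this
    simpa using this
  -- simplex facts
  have hsimplex_mem : ∀ μ : Fin m → ℝ, μ ∈ stdSimplex ℝ (Fin m) ↔
      (∀ i, 0 ≤ μ i) ∧ ∑ i, μ i = 1 := fun μ => Iff.rfl
  -- h is bounded above by M on the simplex
  have hhub : ∀ μ ∈ stdSimplex ℝ (Fin m), h μ ≤ M := by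
    intro μ hμ
    obtain ⟨x⟩ := hSne
    refine le_trans (ciInf_le (hbdd μ) x) ?_
    rw [hQsum]
    calc ∑ i, μ i * Q (L i) (x : Fin N → ℝ) ≤ ∑ i, Mi i := by
          refine Finset.sum_le_sum fun i _ => ?_
          have h1 := hQabs i x
          have h2 := (hsimplex_mem μ).mp hμ
          have h3 : μ i ≤ 1 := by
            have := Finset.single_le_sum (f := μ) (fun k _ => h2.1 k) (Finset.mem_univ i)
            rw [h2.2] at this; exact this
          have h4 := abs_le.mp h1
          nlinarith [h2.1 i, hQnn i x]
      _ = M := rfl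
  -- h is Lipschitz hence continuous
  have hlip1 : ∀ μ ν : Fin m → ℝ, h μ ≤ h ν + M * dist μ ν := by
    intro μ ν
    refine ciInf_le_ciInf_add' _ _ _ (hbdd μ) fun x => ?_
    rw [hQsum, hQsum]
    have key : ∀ i ∈ Finset.univ, μ i * Q (L i) (x : Fin N → ℝ) ≤
        ν i * Q (L i) (x : Fin N → ℝ) + dist μ ν * Mi i := by
      intro i _
      have h1 : |μ i - ν i| ≤ dist μ ν := by
        have := dist_le_pi_dist μ ν i
        rwa [Real.dist_eq] at this
      have h2 := hQabs i x
      have h4 := abs_le.mp h2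
      have h5 := abs_le.mp h1
      nlinarith [hMi0 i, dist_nonneg (x := μ) (y := ν)]
    have := Finset.sum_le_sum key
    rw [Finset.sum_add_distrib, ← Finset.mul_sum] at this
    linarith
  have hcont : Continuous h := by
    refine LipschitzWith.continuous (K := M.toNNReal) ?_
    refine LipschitzWith.of_dist_le_mul fun μ ν => ?_
    rw [Real.dist_eq, abs_sub_le_iff]
    have c1 := hlip1 μ ν
    have c2 := hlip1 ν μ
    rw [dist_comm ν μ] at c2
    have hcoe : (M.toNNReal : ℝ) = M := Real.coe_toNNReal M hM0
    constructor <;> [skip; skip] <;> rw [hcoe] <;> linarith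
  -- maximize h on the simplex
  have hsimplexne : (stdSimplex ℝ (Fin m)).Nonempty := by
    refine ⟨fun _ => 1 / m, fun i => by positivity, ?_⟩
    simp
    field_simp
  haveI : Nonempty (stdSimplex ℝ (Fin m)) := hsimplexne.to_subtype
  obtain ⟨μs, hμs, hmax⟩ := (isCompact_stdSimplex ℝ (Fin m)).exists_isMaxOn hsimplexne
    hcont.continuousOn
  -- analysis at the maximizer
  set A : Matrix (Fin N) (Fin N) ℝ := ∑ i, μs i • L i with hA
  have hμs' := (hsimplex_mem μs).mp hμs
  have hApsd : A.PosSemidef := by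
    refine Matrix.PosSemidef.of_dotProduct_mulVec_nonneg ?_ ?_
    · show Aᴴ = A
      rw [hA, conjTranspose_sum]
      refine Finset.sum_congr rfl fun i _ => ?_
      rw [conjTranspose_smul]
      rw [(hpsd i).1]
      congr 1
    · intro x
      have h0 : ∀ i ∈ Finset.univ, (0:ℝ) ≤ μs i * Q (L i) x :=
        fun i _ => mul_nonneg (hμs'.1 i) (by
          have := (hpsd i).dotProduct_mulVec_nonneg x; simpa [hQ] using this)
      have h1 := Finset.sum_nonneg h0
      rw [← hQsum] at h1
      simpa [hQ] using h1
  have hAone : A *ᵥ (fun _ => (1:ℝ)) = 0 := by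
    rw [hA, sum_mulVec']
    have : ∀ i : Fin m, (μs i • L i) *ᵥ (fun _ => (1:ℝ)) = 0 := by
      intro i
      rw [smul_mulVec, hone i, smul_zero]
    simp only [this, Finset.sum_const_zero]
  obtain ⟨xs, G, hGpos, hxs1, hxs2, hxsQ, hgap⟩ :=
    gap_lemma hN A hApsd hAone (hsimple μs hμs)
  set lam : ℝ := sortedEig A ⟨1, hN⟩ with hlamdef
  have hhμs : h μs = lam := by
    apply le_antisymm
    · have h1 := ciInf_le (hbdd μs) (⟨xs, hxs1, hxs2⟩ : S)
      calc h μs ≤ Q (∑ i, μs i • L i) xs := h1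
        _ = lam := hxsQ
    · refine le_ciInf fun x => ?_
      have hg := hgap x x.2.1 x.2.2
      have hc := dot_sq_le xs (x : Fin N → ℝ) hxs1 x.2.1
      show lam ≤ Q (∑ i, μs i • L i) (x : Fin N → ℝ)
      have heq : Q (∑ i, μs i • L i) (x : Fin N → ℝ) = (x : Fin N → ℝ) ⬝ᵥ (A *ᵥ (x : Fin N → ℝ)) := rfl
      rw [heq]
      have hnn2 : (0:ℝ) ≤ 1 - (xs ⬝ᵥ (x : Fin N → ℝ))^2 := by linarith
      have := mul_nonneg (le_of_lt hGpos) hnn2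
      linarith
  -- key perturbation step
  have hkey : ∀ i : Fin m, Q (L i) xs ≤ lam := by
    intro i
    set C : ℝ := 4 * Mi i ^ 2 / G with hC
    have hC0 : 0 ≤ C := by positivity
    have hb : ∀ t : ℝ, 0 < t → t ≤ 1/2 → Q (L i) xs ≤ lam + C * t := by
      intro t ht0 ht2
      set ν : Fin m → ℝ := fun k => (1 - t) * μs k + t * (if k = i then 1 else 0) with hν
      have hνmem : ν ∈ stdSimplex ℝ (Fin m) := by
        constructor
        · intro k
          have h1 := hμs'.1 k
          show 0 ≤ (1 - t) * μs k + t * (if k = i then 1 else 0)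
          have h1t' : (0:ℝ) ≤ 1 - t := by linarith
          have h1tm := mul_nonneg h1t' h1
          split_ifs <;> linarith
        · have h2 : ∑ k, ν k = (1-t) * (∑ k, μs k) + t * (∑ k, if k = i then (1:ℝ) else 0) := by
            rw [Finset.mul_sum, Finset.mul_sum, ← Finset.sum_add_distrib]
          rw [h2, hμs'.2, Finset.sum_ite_eq' Finset.univ i (fun _ => (1:ℝ))]
          simp
      have hle : h ν ≤ lam := le_trans (hmax hνmem) (le_of_eq hhμs)
      -- pointwise lower bound for Q(L ν) on S
      have hlow : ∀ x : S, (1-t) * lam + t * Q (L i) xs - C * t^2 ≤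
          Q (∑ k, ν k • L k) (x : Fin N → ℝ) := by
        intro x
        have hsplit : Q (∑ k, ν k • L k) (x : Fin N → ℝ)
            = (1-t) * Q A (x : Fin N → ℝ) + t * Q (L i) (x : Fin N → ℝ) := by
          rw [hQsum]
          have e1 : ∀ k : Fin m, ν k * Q (L k) (x : Fin N → ℝ)
              = (1-t) * (μs k * Q (L k) (x : Fin N → ℝ))
                + t * ((if k = i then (1:ℝ) else 0) * Q (L k) (x : Fin N → ℝ)) := by
            intro k; show ((1 - t) * μs k + t * (if k = i then 1 else 0)) * Q (L k) (x : Fin N → ℝ) = _; ring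
          have e2 : ∑ k, (if k = i then (1:ℝ) else 0) * Q (L k) (x : Fin N → ℝ)
              = Q (L i) (x : Fin N → ℝ) := by
            rw [Finset.sum_eq_single i]
            · simp
            · intro k _ hk; simp [hk]
            · simp
          rw [Finset.sum_congr rfl (fun k _ => e1 k), Finset.sum_add_distrib,
            ← Finset.mul_sum, ← Finset.mul_sum, ← hQsum, e2]
        -- sign normalization
        set c : ℝ := xs ⬝ᵥ (x : Fin N → ℝ) with hcdef
        set e : ℝ := if 0 ≤ c then 1 else -1 with he
        set y : Fin N → ℝ := e • (x : Fin N → ℝ) with hy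
        have he2 : e * e = 1 := by rw [he]; split_ifs <;> norm_num
        have hy1 : y ⬝ᵥ y = 1 := by
          rw [hy, smul_dotProduct, dotProduct_smul, smul_eq_mul, smul_eq_mul, x.2.1,
            mul_one, he2]
        have hy2 : y ⬝ᵥ (fun _ => (1:ℝ)) = 0 := by
          rw [hy, smul_dotProduct, smul_eq_mul, x.2.2, mul_zero]
        have hcy : xs ⬝ᵥ y = |c| := by
          rw [hy, dotProduct_smul, smul_eq_mul, ← hcdef]
          rw [he]
          split_ifs with h0
          · rw [one_mul, abs_of_nonneg h0]
          · rw [abs_of_neg (lt_of_not_ge h0)]; ring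
        have hQy : ∀ B : Matrix (Fin N) (Fin N) ℝ, Q B y = Q B (x : Fin N → ℝ) := by
          intro B
          show y ⬝ᵥ (B *ᵥ y) = _
          rw [hy, smul_dotProduct, mulVec_smul, dotProduct_smul, smul_eq_mul, smul_eq_mul,
            ← mul_assoc, he2, one_mul]
        have hgy := hgap y hy1 hy2
        have hcsq : c ^ 2 ≤ 1 := dot_sq_le xs (x : Fin N → ℝ) hxs1 x.2.1
        have habs : |c| ≤ 1 := by
          have h0 := abs_nonneg c
          have h1 := sq_abs c
          nlinarith [h0, h1, hcsq]
        set D : ℝ := 2 - 2 * |c| with hD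
        have hD0 : 0 ≤ D := by rw [hD]; linarith
        set d : ℝ := Real.sqrt D with hd
        have hd0 : 0 ≤ d := Real.sqrt_nonneg D
        have hd2 : d ^ 2 = D := Real.sq_sqrt hD0
        have hyxsD : (y - xs) ⬝ᵥ (y - xs) = D := by
          rw [sub_dotProduct, dotProduct_sub, dotProduct_sub, hy1, hxs1,
            dotProduct_comm y xs, hcy, hD]
          ring
        have hdentry : ∀ k, |y k - xs k| ≤ d := by
          intro k
          have h1 : (y k - xs k) * (y k - xs k) ≤ D := by
            rw [← hyxsD]
            exact Finset.single_le_sum (f := fun j => (y j - xs j) * (y j - xs j))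
              (fun j _ => mul_self_nonneg _) (Finset.mem_univ k)
          calc |y k - xs k| = Real.sqrt ((y k - xs k)^2) := (Real.sqrt_sq_eq_abs _).symm
            _ ≤ Real.sqrt D := Real.sqrt_le_sqrt (by rw [sq]; exact h1)
        have hdiff : |Q (L i) y - Q (L i) xs| ≤ 2 * Mi i * d := by
          have := quad_diff (L i) y xs hy1 hxs1 d hdentry
          calc |Q (L i) y - Q (L i) xs| ≤ 2 * (∑ a, ∑ b, |L i a b|) * d := this
            _ = 2 * Mi i * d := rfl
        have hs2 : D / 2 ≤ 1 - (xs ⬝ᵥ y) ^ 2 := by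
          rw [hcy, hD]
          have h0 := mul_le_mul_of_nonneg_left habs (abs_nonneg c)
          rw [sq]
          linarith
        -- assemble
        rw [hsplit, ← hQy A, ← hQy (L i)]
        have hgyD : lam + G * (D/2) ≤ Q A y := by
          have hmono2 : G * (D/2) ≤ G * (1 - (xs ⬝ᵥ y)^2) :=
            mul_le_mul_of_nonneg_left hs2 (le_of_lt hGpos)
          calc lam + G * (D/2) ≤ lam + G * (1 - (xs ⬝ᵥ y)^2) := by linarith
            _ ≤ Q A y := hgy
        have habsd := abs_le.mp hdiff
        -- AM-GM : (G/4) d^2 - 2 Mi t d ≥ - C t^2 with C = 4 Mi^2/G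
        have hamgm : - (C * t^2) ≤ (G/4) * d^2 - 2 * Mi i * t * d := by
          have hsq : (0:ℝ) ≤ ((G/2)*d - 2*Mi i*t)^2 / G := by positivity
          have hexp : ((G/2)*d - 2*Mi i*t)^2 / G = (G/4)*d^2 - 2*Mi i*t*d + C*t^2 := by
            rw [hC]; field_simp; ring
          rw [hexp] at hsq
          linarith
        have h1t : (1:ℝ)/2 ≤ 1 - t := by linarith
        have hQA : (1-t) * (lam + G * (D/2)) ≤ (1-t) * Q A y :=
          mul_le_mul_of_nonneg_left hgyD (by linarith)
        have hQi : t * (Q (L i) xs - 2 * Mi i * d) ≤ t * Q (L i) y :=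
          mul_le_mul_of_nonneg_left (by linarith [habsd.1]) (le_of_lt ht0)
        have hGD : (G/4) * d^2 ≤ (1-t) * (G * (D/2)) := by
          rw [hd2]
          have hx2 : (0:ℝ) ≤ G * (D/2) := by positivity
          have hx3 := mul_le_mul_of_nonneg_right h1t hx2
          linarith
        linarith [hamgm, hQA, hQi, hGD]
      have hlow2 : (1-t) * lam + t * Q (L i) xs - C * t^2 ≤ h ν := le_ciInf hlow
      by_contra hcon2
      push_neg at hcon2
      have hmul := (mul_lt_mul_iff_right₀ ht0).mpr hcon2
      linarith [hlow2, hle, hmul]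
    -- conclude Q (L i) xs ≤ lam
    by_contra hcon
    push_neg at hcon
    set ε : ℝ := Q (L i) xs - lam with hε
    have hε0 : 0 < ε := by rw [hε]; linarith
    have h2C : (0:ℝ) < 2*C+1 := by linarith
    have htpos : 0 < ε / (2*C+1) := by positivity
    set t : ℝ := min (1/2) (ε / (2*C+1)) with ht
    have ht0 : 0 < t := lt_min (by norm_num) htpos
    have hbt := hb t ht0 (min_le_left _ _)
    have htle : t ≤ ε / (2*C+1) := min_le_right _ _
    have hCt : C * t ≤ C * (ε / (2*C+1)) := mul_le_mul_of_nonneg_left htle hC0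
    have h3 : C * (ε / (2*C+1)) < ε := by
      rw [← mul_div_assoc, div_lt_iff₀ h2C]
      have h4 : (0:ℝ) < C + 1 := by linarith
      have h5 := mul_pos hε0 h4
      nlinarith [h5]
    linarith [hbt, hCt, h3]
  -- final assembly
  have hFbA : ∀ x : S, BddAbove (Set.range fun i : Fin m => Q (L i) (x : Fin N → ℝ)) :=
    fun x => (Set.finite_range _).bddAbove
  have hFlb : BddBelow (Set.range fun x : S => ⨆ i : Fin m, Q (L i) (x : Fin N → ℝ)) := by
    refine ⟨0, ?_⟩
    rintro r ⟨x, rfl⟩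
    exact le_trans (hQnn ⟨0, hm⟩ x) (le_ciSup (hFbA x) ⟨0, hm⟩)
  have hRub : BddAbove (Set.range fun μ : stdSimplex ℝ (Fin m) => h (μ : Fin m → ℝ)) := by
    refine ⟨M, ?_⟩
    rintro r ⟨μ, rfl⟩
    exact hhub _ μ.2
  apply le_antisymm
  · have h1 : (⨅ x : S, ⨆ i : Fin m, Q (L i) (x : Fin N → ℝ)) ≤
        ⨆ i : Fin m, Q (L i) xs := ciInf_le hFlb (⟨xs, hxs1, hxs2⟩ : S)
    have h2 : (⨆ i : Fin m, Q (L i) xs) ≤ lam := ciSup_le hkey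
    have h3 : lam ≤ ⨆ μ : stdSimplex ℝ (Fin m), h (μ : Fin m → ℝ) := by
      rw [← hhμs]
      exact le_ciSup hRub (⟨μs, hμs⟩ : stdSimplex ℝ (Fin m))
    exact le_trans (le_trans h1 h2) h3
  · refine ciSup_le fun μ => ?_
    refine le_ciInf fun x => ?_
    have h4 : h (μ : Fin m → ℝ) ≤ Q (∑ i, (μ : Fin m → ℝ) i • L i) (x : Fin N → ℝ) :=
      ciInf_le (hbdd _) x
    refine le_trans h4 ?_
    rw [hQsum]
    have hμ2 := (hsimplex_mem _).mp μ.2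
    calc ∑ i, (μ : Fin m → ℝ) i * Q (L i) (x : Fin N → ℝ)
        ≤ ∑ i, (μ : Fin m → ℝ) i * (⨆ k : Fin m, Q (L k) (x : Fin N → ℝ)) := by
          refine Finset.sum_le_sum fun i _ => ?_
          exact mul_le_mul_of_nonneg_left (le_ciSup (hFbA x) i) (hμ2.1 i)
      _ = ⨆ k : Fin m, Q (L k) (x : Fin N → ℝ) := by
          rw [← Finset.sum_mul, show ∑ i, μ i = 1 from hμ2.2, one_mul]
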